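/- Let p₁, …, p_r be distinct primes and m ≥ 2. If P is a polynomial over ℚ in r variables whose degree in each variable is strictly less than m, and P(p₁^{1/m}, …, p_r^{1/m}) = 0, then all coefficients of P vanish; equivalently, the real numbers p₁^{c₁/m}⋯p_r^{c_r/m} for 0 ≤ c_i < m are linearly independent over ℚ. -/

import Mathlib

open Polynomial
open scoped IntermediateField
set_option maxHeartbeats 1000000

lemma pow_inj_nonneg {a b : ℝ} {n : ℕ} (hn : n ≠ 0) (ha : 0 ≤ a) (hb : 0 ≤ b)
    (h : a ^ n = b ^ n) : a = b :=
  (pow_left_strictMonoOn₀ hn).injOn ha hb h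

theorem pow_root_irreducible : ∀ (n : ℕ), ∀ (K : Type) [inst : Field K], ∀ (f : K →+* ℝ)
    (x : ℝ), 0 < n → 0 < x → (∀ k : ℕ, 0 < k → k < n → x ^ k ∉ Set.range f) →
    ∀ a : K, f a = x ^ n → Irreducible (X ^ n - C a) := by
  intro n
  induction n using Nat.strong_induction_on with
  | _ n IH =>
  intro K _ f x hn hx hmin a ha
  rcases eq_or_lt_of_le (show 1 ≤ n by omega) with h1 | h2
  · rw [← h1, pow_one]
    exact irreducible_X_sub_C a
  · -- n ≥ 2
    have hn2 : 2 ≤ n := h2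
    set q := n.minFac with hqdef
    have hq : q.Prime := Nat.minFac_prime (by omega)
    have hqd : q ∣ n := n.minFac_dvd
    set s := n / q with hsdef
    have hsq : s * q = n := Nat.div_mul_cancel hqd
    have hs1 : 0 < s := Nat.div_pos (Nat.minFac_le (by omega)) hq.pos
    have hslt : s < n := Nat.div_lt_self (by omega) hq.one_lt
    have hys : f a = (x ^ q) ^ s := by rw [← pow_mul, mul_comm q s, hsq, ha]
    have irr1 : Irreducible (X ^ s - C a) := by
      refine IH s hslt K f (x ^ q) hs1 (pow_pos hx q) (fun k hk hks => ?_) a hys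
      rw [← pow_mul]
      refine hmin (q * k) (Nat.mul_pos hq.pos hk) ?_
      calc q * k < q * s := (Nat.mul_lt_mul_left hq.pos).mpr hks
        _ = n := by rw [mul_comm]; exact hsq
    haveI := Fact.mk irr1
    have hsC : (X ^ s - C a : K[X]) ≠ 0 := X_pow_sub_C_ne_zero hs1 a
    have hevalg : Polynomial.eval₂ f (x ^ q) (X ^ s - C a) = 0 := by
      simp [hys]
    set g : AdjoinRoot (X ^ s - C a) →+* ℝ := AdjoinRoot.lift f (x ^ q) hevalg with hgdef
    have hgroot : g (AdjoinRoot.root _) = x ^ q := AdjoinRoot.lift_root _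
    have hgof : ∀ c : K, g (algebraMap K _ c) = f c := fun c => AdjoinRoot.lift_of _
    have hxg : x ∉ Set.range g := by
      rintro ⟨ξ, hξ⟩
      have hξq : ξ ^ q = AdjoinRoot.root (X ^ s - C a) := by
        apply g.injective
        rw [map_pow, hξ, hgroot]
      have hminp : minpoly K (AdjoinRoot.root (X ^ s - C a)) = X ^ s - C a := by
        refine (minpoly.eq_of_irreducible_of_monic irr1 ?_ (monic_X_pow_sub_C a hs1.ne')).symm
        simp [root_X_pow_sub_C_pow]
      have hnorm : Algebra.norm K (AdjoinRoot.root (X ^ s - C a)) = (-1) ^ s * (-a) := by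
        rw [← AdjoinRoot.powerBasis_gen hsC,
          Algebra.PowerBasis.norm_gen_eq_coeff_zero_minpoly, AdjoinRoot.powerBasis_dim,
          AdjoinRoot.powerBasis_gen hsC, hminp, natDegree_X_pow_sub_C,
          coeff_sub, coeff_X_pow, coeff_C_zero, if_neg (by omega : ¬(0 = s))]
        ring
      have hcq : (Algebra.norm K ξ) ^ q = (-1) ^ s * (-a) := by
        rw [← map_pow, hξq, hnorm]
      have hfcq : (f (Algebra.norm K ξ)) ^ q = (-1:ℝ) ^ s * (-(x ^ n)) := by
        rw [← map_pow, hcq, map_mul, map_pow, map_neg, map_one, map_neg, ha]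
      have habs : |f (Algebra.norm K ξ)| = x ^ s := by
        have h2 : |f (Algebra.norm K ξ)| ^ q = (x ^ s) ^ q := by
          rw [← abs_pow, hfcq, abs_mul, abs_pow, abs_neg, abs_one, one_pow, one_mul, abs_neg,
            abs_of_pos (pow_pos hx n), ← pow_mul, hsq]
        exact pow_inj_nonneg hq.ne_zero (abs_nonneg _) (pow_nonneg hx.le s) h2
      refine hmin s hs1 hslt ?_
      rcases abs_cases (f (Algebra.norm K ξ)) with ⟨h, _⟩ | ⟨h, _⟩
      · exact ⟨_, by rw [← h, ← habs]⟩
      · exact ⟨-(Algebra.norm K ξ), by rw [map_neg, ← h, ← habs]⟩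
    have irr2 : Irreducible (X ^ q - C (AdjoinRoot.root (X ^ s - C a))) := by
      apply X_pow_sub_C_irreducible_of_prime hq
      intro b hb
      apply hxg
      have hgb : (g b) ^ q = x ^ q := by rw [← map_pow, hb, hgroot]
      have habs : |g b| = x := by
        refine pow_inj_nonneg hq.ne_zero (abs_nonneg _) hx.le ?_
        rw [← abs_pow, hgb, abs_of_pos (pow_pos hx q)]
      rcases abs_cases (g b) with ⟨h, _⟩ | ⟨h, _⟩
      · exact ⟨b, by rw [← h, ← habs]⟩
      · exact ⟨-b, by rw [map_neg, ← h, ← habs]⟩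
    haveI := Fact.mk irr2
    set K' := AdjoinRoot (X ^ s - C a) with hK'def
    set K'' := AdjoinRoot (X ^ q - C (AdjoinRoot.root (X ^ s - C a))) with hK''def
    set β : K'' := AdjoinRoot.root _ with hβdef
    have hβq : β ^ q = algebraMap K' K'' (AdjoinRoot.root _) := root_X_pow_sub_C_pow q _
    have hβn : β ^ n = algebraMap K K'' a := by
      rw [← hsq, mul_comm s q, pow_mul, hβq, ← map_pow, root_X_pow_sub_C_pow,
        IsScalarTower.algebraMap_apply K K' K'', AdjoinRoot.algebraMap_eq]
      rw [AdjoinRoot.algebraMap_eq]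
    have hβint : IsIntegral K β :=
      ⟨X ^ n - C a, monic_X_pow_sub_C a (by omega), by simp [hβn]⟩
    haveI : Module.Finite K K' := Module.Finite.of_basis (AdjoinRoot.powerBasis hsC).basis
    have hqC : (X ^ q - C (AdjoinRoot.root (X ^ s - C a)) : K'[X]) ≠ 0 :=
      X_pow_sub_C_ne_zero hq.pos _
    haveI : Module.Finite K' K'' := Module.Finite.of_basis (AdjoinRoot.powerBasis hqC).basis
    haveI : Module.Finite K K'' := Module.Finite.trans K' K''
    have hrk1 : Module.finrank K K' = s := by
      rw [(AdjoinRoot.powerBasis hsC).finrank, AdjoinRoot.powerBasis_dim, natDegree_X_pow_sub_C]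
    have hrk2 : Module.finrank K' K'' = q := by
      rw [(AdjoinRoot.powerBasis hqC).finrank, AdjoinRoot.powerBasis_dim, natDegree_X_pow_sub_C]
    have hrk : Module.finrank K K'' = n := by
      rw [← Module.finrank_mul_finrank K K' K'', hrk1, hrk2, hsq]
    -- adjoin K {β} = ⊤
    have hmapadj : ∀ c : K', algebraMap K' K'' c ∈ Algebra.adjoin K ({β} : Set K'') := by
      intro c
      have hc : c ∈ Algebra.adjoin K ({AdjoinRoot.root (X ^ s - C a)} : Set K') := by
        rw [AdjoinRoot.adjoinRoot_eq_top]; trivial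
      induction hc using Algebra.adjoin_induction with
      | mem w hw =>
        rw [Set.mem_singleton_iff] at hw
        subst hw
        rw [← hβq]
        exact pow_mem (Algebra.subset_adjoin (Set.mem_singleton β)) q
      | algebraMap r =>
        rw [← IsScalarTower.algebraMap_apply]
        exact Subalgebra.algebraMap_mem _ r
      | add u v hu hv h1 h2 =>
        rw [map_add]; exact add_mem h1 h2
      | mul u v hu hv h1 h2 =>
        rw [map_mul]; exact mul_mem h1 h2
    have hadj : Algebra.adjoin K ({β} : Set K'') = ⊤ := by
      rw [eq_top_iff]
      rintro z -
      have hz : z ∈ Algebra.adjoin K' ({β} : Set K'') := by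
        rw [hβdef, AdjoinRoot.adjoinRoot_eq_top]; trivial
      induction hz using Algebra.adjoin_induction with
      | mem w hw => exact Algebra.subset_adjoin hw
      | algebraMap c => exact hmapadj c
      | add _ _ _ _ h1 h2 => exact add_mem h1 h2
      | mul _ _ _ _ h1 h2 => exact mul_mem h1 h2
    -- degree of minpoly K β is n
    have hIF : K⟮β⟯ = ⊤ := by
      rw [← IntermediateField.toSubalgebra_injective.eq_iff]
      rw [IntermediateField.top_toSubalgebra]
      rw [eq_top_iff, ← hadj]
      exact Algebra.adjoin_le (IntermediateField.subset_adjoin K _)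
    have hdeg : (minpoly K β).natDegree = n := by
      have h5 := IntermediateField.adjoin.finrank hβint
      rw [← h5, hIF, IntermediateField.finrank_top']
      exact hrk
    -- conclude
    have hdvd : minpoly K β ∣ X ^ n - C a := minpoly.dvd K β (by simp [hβn])
    obtain ⟨cp, hcp⟩ := hdvd
    have hmo := minpoly.monic hβint
    have hcne : cp ≠ 0 := by
      rintro rfl
      rw [mul_zero] at hcp
      exact X_pow_sub_C_ne_zero (by omega : 0 < n) a hcp
    have hdegc : cp.natDegree = 0 := by
      have h6 : (X ^ n - C a : K[X]).natDegree = n := natDegree_X_pow_sub_C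
      rw [hcp, natDegree_mul hmo.ne_zero hcne, hdeg] at h6
      omega
    have hlc : cp.Monic := by
      have h7 : (X ^ n - C a : K[X]).leadingCoeff = 1 := monic_X_pow_sub_C a (by omega : n ≠ 0)
      rw [hcp, leadingCoeff_mul, hmo.leadingCoeff, one_mul] at h7
      exact h7
    have hcp1 : cp = 1 := Polynomial.eq_one_of_monic_natDegree_zero hlc hdegc
    rw [hcp, hcp1, mul_one]
    exact minpoly.irreducible hβint

lemma trace_eq_zero (K L : Type) [Field K] [Field L] [Algebra K L] [FiniteDimensional K L]
    (j : L →+* ℝ) (z : L)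
    (hz : 0 < j z) (hznot : j z ∉ Set.range (j.comp (algebraMap K L)))
    (M : ℕ) (hM : 0 < M) (hzM : (j z) ^ M ∈ Set.range (j.comp (algebraMap K L))) :
    Algebra.trace K L z = 0 := by
  classical
  letI : Algebra L ℝ := j.toAlgebra
  letI : Algebra K ℝ := (j.comp (algebraMap K L)).toAlgebra
  haveI : IsScalarTower K L ℝ := IsScalarTower.of_algebraMap_eq (fun q => rfl)
  set x : ℝ := j z with hxdef
  have hex : ∃ k, 0 < k ∧ x ^ k ∈ Set.range (j.comp (algebraMap K L)) := ⟨M, hM, hzM⟩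
  set d := Nat.find hex with hd
  obtain ⟨hd0, b, hb⟩ := Nat.find_spec hex
  rw [← hd] at hd0 hb
  have hmin : ∀ k, 0 < k → k < d → x ^ k ∉ Set.range (j.comp (algebraMap K L)) :=
    fun k hk hkd hmem => Nat.find_min hex hkd ⟨hk, hmem⟩
  have hd2 : 2 ≤ d := by
    by_contra h
    have h1 : d = 1 := by omega
    rw [h1, pow_one] at hb
    exact hznot ⟨b, hb⟩
  have hirr : Irreducible (X ^ d - C b) :=
    pow_root_irreducible d K (j.comp (algebraMap K L)) x hd0 hz hmin b hb
  have hmpx : minpoly K x = X ^ d - C b := by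
    refine (minpoly.eq_of_irreducible_of_monic hirr ?_ (monic_X_pow_sub_C b hd0.ne')).symm
    have : (algebraMap K ℝ) b = x ^ d := hb
    simp [this.symm, Algebra.algebraMap_eq_smul_one]
  have hint : IsIntegral K z := IsIntegral.of_finite K z
  have hmpz : minpoly K z = X ^ d - C b := by
    rw [← hmpx]
    have hxz : x = algebraMap L ℝ z := rfl
    rw [hxz]
    exact (minpoly.algebraMap_eq j.injective z).symm
  haveI : FiniteDimensional K K⟮z⟯ := IntermediateField.adjoin.finiteDimensional hint
  haveI : FiniteDimensional (↥K⟮z⟯) L := FiniteDimensional.right K (↥K⟮z⟯) L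
  have hmg : minpoly K (IntermediateField.AdjoinSimple.gen K z) = X ^ d - C b := by
    rw [← hmpz, ← minpoly.algebraMap_eq (A := K) (algebraMap (↥K⟮z⟯) L).injective,
      IntermediateField.AdjoinSimple.algebraMap_gen]
  have htg : Algebra.trace K (↥K⟮z⟯) (IntermediateField.AdjoinSimple.gen K z) = 0 := by
    have hpbgen : (IntermediateField.adjoin.powerBasis hint).gen
        = IntermediateField.AdjoinSimple.gen K z := rfl
    rw [← hpbgen, PowerBasis.trace_gen_eq_nextCoeff_minpoly, hpbgen, hmg]
    rw [nextCoeff, natDegree_X_pow_sub_C, if_neg (by omega : ¬ d = 0), coeff_sub, coeff_X_pow,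
      if_neg (by omega : ¬ d - 1 = d), coeff_C, if_neg (by omega : ¬ d - 1 = 0)]
    simp
  have h1 : Algebra.trace K L z
      = Algebra.trace K (↥K⟮z⟯) (Algebra.trace (↥K⟮z⟯) L z) := (Algebra.trace_trace z).symm
  have h2 := Algebra.trace_algebraMap (R := ↥K⟮z⟯) (S := L)
    (IntermediateField.AdjoinSimple.gen K z)
  rw [IntermediateField.AdjoinSimple.algebraMap_gen] at h2
  rw [h1, h2, map_nsmul, htg, smul_zero]

lemma li_of_radicals {ι : Type} [Fintype ι] (v : ι → ℝ) (M : ℕ) (hM : 0 < M)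
    (hpos : ∀ i, 0 < v i) (hrat : ∀ i, ∃ a : ℚ, (a : ℝ) = (v i) ^ M)
    (hclass : ∀ i j, i ≠ j → (v i / v j) ∉ Set.range (algebraMap ℚ ℝ)) :
    LinearIndependent ℚ v := by
  rw [Fintype.linearIndependent_iff]
  intro g hg i0
  classical
  set z : ι → ℝ := fun i => v i / v i0 with hz
  have hzpos : ∀ i, 0 < z i := fun i => div_pos (hpos i) (hpos i0)
  have hzM : ∀ i, (z i) ^ M ∈ Set.range (algebraMap ℚ ℝ) := by
    intro i
    obtain ⟨a, haa⟩ := hrat i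
    obtain ⟨b, hbb⟩ := hrat i0
    have hb0 : (b : ℝ) ≠ 0 := by rw [hbb]; exact (pow_pos (hpos i0) M).ne'
    refine ⟨a / b, ?_⟩
    rw [eq_ratCast (algebraMap ℚ ℝ)]
    push_cast
    rw [haa, hbb, hz]
    simp [div_pow]
  have hint : ∀ i, IsIntegral ℚ (z i) := by
    intro i
    obtain ⟨a, haa⟩ := hzM i
    refine ⟨X ^ M - C a, monic_X_pow_sub_C a hM.ne', ?_⟩
    simp only [eval₂_sub, eval₂_pow, eval₂_X, eval₂_C]
    rw [haa]
    ring
  set L := IntermediateField.adjoin ℚ (Set.range z) with hL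
  haveI : Finite (Set.range z) := Set.finite_range z
  haveI : FiniteDimensional ℚ L :=
    IntermediateField.finiteDimensional_adjoin (fun y hy => by
      obtain ⟨i, rfl⟩ := hy; exact hint i)
  set w : ι → L := fun i => ⟨z i, IntermediateField.subset_adjoin _ _ ⟨i, rfl⟩⟩ with hw
  have hsum : ∑ i, g i • w i = 0 := by
    apply (algebraMap (↥L) ℝ).injective
    rw [map_zero, map_sum]
    have hterm : ∀ i, (algebraMap (↥L) ℝ) (g i • w i) = (g i : ℝ) * (v i / v i0) := by
      intro i
      rw [map_rat_smul]
      rw [Rat.smul_def]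
      rfl
    rw [Finset.sum_congr rfl fun i _ => hterm i]
    have h2 : ∀ i, (g i : ℝ) * (v i / v i0) = ((g i : ℝ) * v i) / v i0 := fun i =>
      (mul_div_assoc _ _ _).symm
    rw [Finset.sum_congr rfl fun i _ => h2 i, ← Finset.sum_div]
    have h3 : ∑ i, (g i : ℝ) * v i = 0 := by
      have := hg
      simp only [Rat.smul_def] at this
      exact this
    rw [h3, zero_div]
  have htr : ∑ i, g i • Algebra.trace ℚ (↥L) (w i) = 0 := by
    have h4 := congrArg (Algebra.trace ℚ (↥L)) hsum
    rw [map_sum, map_zero] at h4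
    rw [← h4]
    exact Finset.sum_congr rfl fun i _ => (map_rat_smul _ _ _).symm
  rw [Finset.sum_eq_single i0 (fun i _ hi => ?_) (fun h => absurd (Finset.mem_univ i0) h)] at htr
  · have hw1 : w i0 = 1 := by
      apply Subtype.ext
      show z i0 = 1
      rw [hz]
      exact div_self (hpos i0).ne'
    have htr1 : Algebra.trace ℚ (↥L) 1 = (Module.finrank ℚ (↥L) : ℚ) := by
      rw [← map_one (algebraMap ℚ (↥L)), Algebra.trace_algebraMap, nsmul_eq_mul, mul_one]
    rw [hw1, htr1, Rat.smul_def] at htr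
    have hfr : ((Module.finrank ℚ (↥L) : ℚ)) ≠ 0 :=
      Nat.cast_ne_zero.mpr Module.finrank_pos.ne'
    rcases mul_eq_zero.mp htr with h | h
    · exact h
    · exact absurd h hfr
  · have h5 : Algebra.trace ℚ (↥L) (w i) = 0 := by
      have hcomp : (algebraMap (↥L) ℝ).comp (algebraMap ℚ (↥L)) = algebraMap ℚ ℝ :=
        RingHom.ext fun q => by rw [eq_ratCast, eq_ratCast]
      refine trace_eq_zero ℚ (↥L) (algebraMap (↥L) ℝ) (w i) (hzpos i) ?_ M hM ?_
      · rw [hcomp]; exact hclass i i0 hi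
      · rw [hcomp]; exact hzM i
    rw [h5, smul_zero]

theorem stmt18 (r m : ℕ) (hm : 2 ≤ m) (p : Fin r → ℕ) (hp : ∀ i, (p i).Prime)
    (hinj : Function.Injective p) :
    (∀ P : MvPolynomial (Fin r) ℚ, (∀ i, P.degreeOf i < m) →
        (MvPolynomial.aeval fun i => ((p i : ℝ)) ^ ((1 : ℝ) / m)) P = 0 → P = 0) ∧
    LinearIndependent ℚ
      (fun c : Fin r → Fin m => ∏ i, (p i : ℝ) ^ (((c i : ℕ) : ℝ) / m)) := by
  classical
  have hm0 : 0 < m := by omega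
  have hmR : (m : ℝ) ≠ 0 := Nat.cast_ne_zero.mpr hm0.ne'
  set Xc : (Fin r → Fin m) → ℝ :=
    (fun c : Fin r → Fin m => ∏ i, (p i : ℝ) ^ (((c i : ℕ) : ℝ) / m)) with hXc
  have hppos : ∀ i, (0:ℝ) < (p i : ℝ) := fun i => by exact_mod_cast (hp i).pos
  have hXpos : ∀ c, 0 < Xc c := fun c =>
    Finset.prod_pos fun i _ => Real.rpow_pos_of_pos (hppos i) _
  set N : (Fin r → Fin m) → ℕ := fun c => ∏ i, (p i) ^ ((c i : ℕ)) with hN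
  have hN0 : ∀ c, N c ≠ 0 := fun c =>
    (Finset.prod_pos fun i _ => pow_pos (hp i).pos _).ne'
  have hXpow : ∀ c, (Xc c) ^ m = (N c : ℝ) := by
    intro c
    rw [hXc, hN, ← Finset.prod_pow]
    push_cast
    refine Finset.prod_congr rfl fun i _ => ?_
    rw [← Real.rpow_natCast ((p i : ℝ) ^ (((c i : ℕ):ℝ)/m)) m,
      ← Real.rpow_mul (Nat.cast_nonneg _), div_mul_cancel₀ _ hmR, Real.rpow_natCast]
  have hvN : ∀ (i : Fin r) (c : Fin r → Fin m), (N c).factorization (p i) = (c i : ℕ) := by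
    intro i c
    rw [hN]
    rw [Nat.factorization_prod (fun j _ => pow_ne_zero _ (hp j).pos.ne')]
    rw [Finsupp.finset_sum_apply]
    have hterm : ∀ j : Fin r, ((p j) ^ ((c j : ℕ))).factorization (p i)
        = if j = i then (c i : ℕ) else 0 := by
      intro j
      rw [Nat.factorization_pow]
      rw [Finsupp.smul_apply, (hp j).factorization, Finsupp.single_apply]
      by_cases h : j = i
      · subst h; simp
      · rw [if_neg (fun hpp : p j = p i => h (hinj hpp)), if_neg h, smul_zero]
    rw [Finset.sum_congr rfl fun j _ => hterm j]
    simp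
  have hclass : ∀ c c' : Fin r → Fin m, (∃ t : ℚ, (t:ℝ) = Xc c / Xc c') → c = c' := by
    rintro c c' ⟨t, ht⟩
    have htpos : (0:ℝ) < (t:ℝ) := ht ▸ div_pos (hXpos c) (hXpos c')
    have ht0 : t ≠ 0 := by exact_mod_cast htpos.ne'
    have hNQ : ∀ c'', ((N c'' : ℚ)) ≠ 0 := fun c'' => Nat.cast_ne_zero.mpr (hN0 c'')
    have htm : t ^ m = (N c : ℚ) / (N c' : ℚ) := by
      have hcast : ((t ^ m : ℚ) : ℝ) = (((N c : ℚ) / (N c' : ℚ) : ℚ) : ℝ) := by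
        push_cast
        rw [ht, div_pow, hXpow c, hXpow c']
      exact_mod_cast hcast
    funext i
    haveI := Fact.mk (hp i)
    have hv := congrArg (padicValRat (p i)) htm
    rw [padicValRat.pow t, padicValRat.div (hNQ c) (hNQ c'),
      padicValRat.of_nat, padicValRat.of_nat,
      ← Nat.factorization_def _ (hp i), ← Nat.factorization_def _ (hp i),
      hvN i c, hvN i c'] at hv
    have hdvd : (m:ℤ) ∣ ((c i : ℕ) : ℤ) - ((c' i : ℕ) : ℤ) :=
      ⟨padicValRat (p i) t, hv.symm⟩
    have hci := (c i).isLt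
    have hci' := (c' i).isLt
    have h0 := Int.eq_zero_of_abs_lt_dvd hdvd (by
      rw [abs_lt]
      constructor <;> [skip; skip] <;> push_cast <;> omega)
    have : (c i : ℕ) = (c' i : ℕ) := by omega
    exact Fin.ext this
  have LI : LinearIndependent ℚ Xc := by
    refine li_of_radicals Xc m hm0 hXpos (fun c => ⟨(N c : ℚ), ?_⟩) ?_
    · push_cast
      exact (hXpow c).symm
    · rintro c c' hne ⟨t, ht⟩
      rw [eq_ratCast] at ht
      exact hne (hclass c c' ⟨t, ht⟩)
  refine ⟨?_, LI⟩
  intro P hdeg haev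
  set φ : (Fin r → Fin m) → (Fin r →₀ ℕ) :=
    fun c => Finsupp.equivFunOnFinite.symm (fun i => (c i : ℕ)) with hφ
  have hφinj : Function.Injective φ := by
    intro c c' h
    have h2 := Finsupp.equivFunOnFinite.symm.injective h
    funext i
    exact Fin.ext (congrFun h2 i)
  have hφapp : ∀ c i, φ c i = (c i : ℕ) := fun c i => rfl
  have hsupp : P.support ⊆ Finset.image φ Finset.univ := by
    intro d hd
    have hdm : ∀ i, d i < m := fun i => (MvPolynomial.degreeOf_lt_iff hm0).mp (hdeg i) d hd
    refine Finset.mem_image.mpr ⟨fun i => ⟨d i, hdm i⟩, Finset.mem_univ _, ?_⟩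
    rw [hφ]
    exact Finsupp.equivFunOnFinite_symm_coe d
  have haev' : ∑ c : (Fin r → Fin m), MvPolynomial.coeff (φ c) P • (Xc c) = 0 := by
    rw [← haev]
    have h6 : (MvPolynomial.aeval fun i => ((p i : ℝ)) ^ ((1:ℝ)/m)) P
        = ∑ d ∈ P.support, ((MvPolynomial.coeff d P : ℚ) : ℝ)
            * ∏ i, ((p i : ℝ) ^ ((1:ℝ)/m)) ^ d i := by
      rw [MvPolynomial.aeval_def, MvPolynomial.eval₂_eq']
      refine Finset.sum_congr rfl fun d _ => ?_
      rw [eq_ratCast (algebraMap ℚ ℝ)]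
    rw [h6]
    rw [Finset.sum_subset hsupp (fun d _ hd => by
      rw [MvPolynomial.notMem_support_iff.mp hd]
      push_cast
      rw [zero_mul])]
    rw [Finset.sum_image (fun c _ c' _ h => hφinj h)]
    refine Finset.sum_congr rfl fun c _ => ?_
    rw [Rat.smul_def]
    congr 1
    rw [hXc]
    refine Finset.prod_congr rfl fun i _ => ?_
    rw [hφapp c i, ← Real.rpow_natCast ((p i : ℝ) ^ ((1:ℝ)/m)) (c i : ℕ),
      ← Real.rpow_mul (Nat.cast_nonneg _), one_div, inv_mul_eq_div]
  have hall := Fintype.linearIndependent_iff.mp LI (fun c => MvPolynomial.coeff (φ c) P) haev'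
  apply MvPolynomial.ext
  intro d
  rw [MvPolynomial.coeff_zero]
  by_cases hd : d ∈ P.support
  · obtain ⟨c, _, hc⟩ := Finset.mem_image.mp (hsupp hd)
    rw [← hc]
    exact hall c
  · exact MvPolynomial.notMem_support_iff.mp hd
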